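/- Under the regularized DPP distribution with psd matrix A and weights p (so that ∑_i p_i x_i x_iᵀ + A is invertible), E[det(X_Sᵀ X_S + A)^{-1}] ≤ det(∑_i p_i x_i x_iᵀ + A)^{-1}, where the expectation is restricted to subsets S for which X_Sᵀ X_S + A is invertible (assigning 0 otherwise). -/

import Mathlib

open Matrix BigOperators

/-- Expectation of the inverse determinant under the regularized DPP (with the
convention that `(det M)⁻¹ = 0` when `M` is not invertible):
`E[det(X_Sᵀ X_S + A)⁻¹] ≤ det(∑ i, p i • x i x iᵀ + A)⁻¹`. -/
theorem regularized_dpp_expected_inverse_det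
    (n d : ℕ) (x : Fin n → (Fin d → ℝ)) (p : Fin n → ℝ)
    (hp : ∀ i, p i ∈ Set.Icc (0 : ℝ) 1)
    (A : Matrix (Fin d) (Fin d) ℝ) (hA : A.PosSemidef)
    (hinv : IsUnit (∑ i, p i • vecMulVec (x i) (x i) + A).det) :
    ∑ S : Finset (Fin n),
        (((∑ i ∈ S, vecMulVec (x i) (x i)) + A).det *
            ((∏ i ∈ S, p i) * ∏ i ∈ Sᶜ, (1 - p i)) /
              (∑ i, p i • vecMulVec (x i) (x i) + A).det) *
          (((∑ i ∈ S, vecMulVec (x i) (x i)) + A).det)⁻¹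
      ≤ ((∑ i, p i • vecMulVec (x i) (x i) + A).det)⁻¹ := by
  set D : ℝ := (∑ i, p i • vecMulVec (x i) (x i) + A).det with hD
  have hsingle : ∀ (c : ℝ) (v : Fin d → ℝ), 0 ≤ c → (c • vecMulVec v v).PosSemidef := by
    intro c v hc
    rw [posSemidef_iff_dotProduct_mulVec]
    constructor
    · ext i j
      simp only [conjTranspose_apply, Matrix.smul_apply, vecMulVec_apply, star_trivial, smul_eq_mul]
      ring
    · intro y
      have : star y ⬝ᵥ (c • vecMulVec v v) *ᵥ y = c * ((v ⬝ᵥ y) * (v ⬝ᵥ y)) := by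
        simp only [dotProduct, mulVec, Matrix.smul_apply, vecMulVec_apply, star_trivial,
          smul_eq_mul, Finset.mul_sum, Finset.sum_mul]
        rw [Finset.sum_comm]
        congr 1; ext j; congr 1; ext i; ring
      rw [this]
      exact mul_nonneg hc (mul_self_nonneg _)
  have hpsd : (∑ i, p i • vecMulVec (x i) (x i) + A).PosSemidef := by
    apply PosSemidef.add _ hA
    apply Finset.sum_induction _ _ (fun a b => PosSemidef.add) PosSemidef.zero
    intro i _
    exact hsingle (p i) (x i) (hp i).1
  have hdetnn : 0 ≤ D := by
    rw [hD, hpsd.1.det_eq_prod_eigenvalues]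
    exact Finset.prod_nonneg fun i _ => hpsd.eigenvalues_nonneg i
  have hDpos : 0 < D := lt_of_le_of_ne hdetnn
    (Ne.symm (isUnit_iff_ne_zero.mp hinv))
  have hw : ∀ S : Finset (Fin n), 0 ≤ (∏ i ∈ S, p i) * ∏ i ∈ Sᶜ, (1 - p i) := by
    intro S
    exact mul_nonneg (Finset.prod_nonneg fun i _ => (hp i).1)
      (Finset.prod_nonneg fun i _ => by linarith [(hp i).2])
  have key : ∑ S : Finset (Fin n),
      ((∏ i ∈ S, p i) * ∏ i ∈ Sᶜ, (1 - p i)) = 1 := by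
    have := Finset.prod_add p (fun i => 1 - p i) (Finset.univ : Finset (Fin n))
    simp only [add_sub_cancel, Finset.prod_const_one, Finset.prod_const] at this
    rw [Finset.powerset_univ] at this
    calc ∑ S : Finset (Fin n), ((∏ i ∈ S, p i) * ∏ i ∈ Sᶜ, (1 - p i))
        = ∑ S : Finset (Fin n), ((∏ i ∈ S, p i) * ∏ i ∈ Finset.univ \ S, (1 - p i)) := by
          simp [Finset.compl_eq_univ_sdiff]
      _ = 1 := this.symm
  calc ∑ S : Finset (Fin n),
        (((∑ i ∈ S, vecMulVec (x i) (x i)) + A).det *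
            ((∏ i ∈ S, p i) * ∏ i ∈ Sᶜ, (1 - p i)) / D) *
          (((∑ i ∈ S, vecMulVec (x i) (x i)) + A).det)⁻¹
      ≤ ∑ S : Finset (Fin n), ((∏ i ∈ S, p i) * ∏ i ∈ Sᶜ, (1 - p i)) / D := by
        apply Finset.sum_le_sum
        intro S _
        set a : ℝ := ((∑ i ∈ S, vecMulVec (x i) (x i)) + A).det
        set w : ℝ := (∏ i ∈ S, p i) * ∏ i ∈ Sᶜ, (1 - p i)
        rcases eq_or_ne a 0 with h | h
        · rw [h]
          simp only [zero_mul, zero_div, _root_.inv_zero, mul_zero]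
          exact div_nonneg (hw S) hDpos.le
        · rw [mul_comm a w, mul_div_assoc, mul_assoc, div_mul_eq_mul_div,
            mul_inv_cancel₀ h, mul_one_div]

    _ = (∑ S : Finset (Fin n), ((∏ i ∈ S, p i) * ∏ i ∈ Sᶜ, (1 - p i))) / D := by
        rw [Finset.sum_div]
    _ = D⁻¹ := by rw [key, one_div]
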